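/- arXiv:1710.01588 — 3 statements merged into one kernel-verified Lean document; each statement's English description precedes it below -/
import Mathlib

section
/- For fixed z in the open unit disk, (1/2π) ∫₀^{2π} ((e^{iu} − z)/(1 − z̄ e^{iu})) · (e^{iu}/(z − e^{iu})²) du = 1/(1 − |z|²), while (1/2π) ∫₀^{2π} ((e^{iu} − z)/(1 − z̄ e^{iu})) · (e^{−iu}/(z̄ − e^{−iu})²) du = 0. -/
open Complex Real Metric intervalIntegral

/-- For `|z| < 1`:
`(1/2π)∫₀^{2π} ((e^{iu}−z)/(1−z̄e^{iu})) e^{iu}/(z−e^{iu})² du = 1/(1−|z|²)`, and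
`(1/2π)∫₀^{2π} ((e^{iu}−z)/(1−z̄e^{iu})) e^{−iu}/(z̄−e^{−iu})² du = 0`. -/
theorem stmt8 (z : ℂ) (hz : ‖z‖ < 1) :
    ((1 / (2 * Real.pi) : ℂ) * ∫ u in (0:ℝ)..(2 * Real.pi),
        ((Complex.exp (u * Complex.I) - z) / (1 - (starRingEnd ℂ) z * Complex.exp (u * Complex.I))) *
          (Complex.exp (u * Complex.I) / (z - Complex.exp (u * Complex.I)) ^ 2)
      = 1 / ((1 - ‖z‖ ^ 2 : ℝ) : ℂ)) ∧
    ((1 / (2 * Real.pi) : ℂ) * ∫ u in (0:ℝ)..(2 * Real.pi),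
        ((Complex.exp (u * Complex.I) - z) / (1 - (starRingEnd ℂ) z * Complex.exp (u * Complex.I))) *
          (Complex.exp (-(u : ℂ) * Complex.I) /
            ((starRingEnd ℂ) z - Complex.exp (-(u : ℂ) * Complex.I)) ^ 2)
      = 0) := by
  set c := (starRingEnd ℂ) z with hc
  have hπ : (Real.pi : ℝ) ≠ 0 := Real.pi_ne_zero
  have habs : ∀ u : ℝ, ‖Complex.exp (u * Complex.I)‖ = 1 := fun u =>
    Complex.norm_exp_ofReal_mul_I u
  have hden : ∀ w : ℂ, ‖w‖ ≤ 1 → 1 - c * w ≠ 0 := by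
    intro w hw h
    have h1 : c * w = 1 := by linear_combination -h
    have h2 : ‖c * w‖ < 1 := by
      rw [norm_mul, hc, Complex.norm_conj]
      calc ‖z‖ * ‖w‖ ≤ ‖z‖ * 1 :=
            mul_le_mul_of_nonneg_left hw (norm_nonneg z)
        _ < 1 := by simpa using hz
    rw [h1] at h2; simp at h2
  -- Part 1
  have hd1 : DiffContOnCl ℂ (fun w => (1 - c * w)⁻¹) (ball (0:ℂ) 1) := by
    apply DifferentiableOn.diffContOnCl
    rw [closure_ball (0:ℂ) one_ne_zero]
    apply DifferentiableOn.inv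
    · exact (differentiableOn_const _).sub ((differentiableOn_const _).mul differentiableOn_id)
    · intro w hw
      exact hden w (by simpa [Complex.dist_eq] using mem_closedBall.mp hw)
  have key1 : (∮ w in C(0, 1), (w - z)⁻¹ • (1 - c * w)⁻¹) = (2 * π * Complex.I : ℂ) • (1 - c * z)⁻¹ :=
    hd1.circleIntegral_sub_inv_smul (by simpa [Complex.dist_eq] using hz)
  rw [circleIntegral] at key1
  have hpt1 : ∀ u ∈ Set.uIcc (0:ℝ) (2*π),
      ((Complex.exp (u * Complex.I) - z) / (1 - c * Complex.exp (u * Complex.I))) *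
        (Complex.exp (u * Complex.I) / (z - Complex.exp (u * Complex.I)) ^ 2)
      = Complex.I⁻¹ * (deriv (circleMap 0 1) u • ((circleMap 0 1 u - z)⁻¹ • (1 - c * circleMap 0 1 u)⁻¹)) := by
    intro u _
    have hnez : Complex.exp (u * Complex.I) - z ≠ 0 := by
      intro h
      have he : Complex.exp (u * Complex.I) = z := by linear_combination h
      rw [← he, habs u] at hz; simp at hz
    have h2 : z - Complex.exp (u * Complex.I) ≠ 0 := by
      intro h; apply hnez; linear_combination -h
    have hnec : 1 - c * Complex.exp (u * Complex.I) ≠ 0 := hden _ (le_of_eq (habs u))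
    simp only [deriv_circleMap, circleMap, smul_eq_mul, Complex.ofReal_one, one_mul,
      Complex.ofReal_zero, zero_add]
    field_simp [hnez, hnec, h2]
    ring_nf
  have hint1 : (∫ u in (0:ℝ)..(2*π),
      ((Complex.exp (u * Complex.I) - z) / (1 - c * Complex.exp (u * Complex.I))) *
        (Complex.exp (u * Complex.I) / (z - Complex.exp (u * Complex.I)) ^ 2))
      = Complex.I⁻¹ * ((2 * π * Complex.I : ℂ) * (1 - c * z)⁻¹) := by
    rw [intervalIntegral.integral_congr hpt1, intervalIntegral.integral_const_mul, key1]
    simp [smul_eq_mul]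
  have hzz : (1 : ℂ) - c * z = ((1 - ‖z‖ ^ 2 : ℝ) : ℂ) := by
    have h1 : c * z = ((‖z‖ ^ 2 : ℝ) : ℂ) := by
      rw [hc, mul_comm, Complex.mul_conj, Complex.sq_norm]
    rw [h1]; push_cast; ring
  constructor
  · rw [hint1, hzz]
    have hne : ((1 - ‖z‖ ^ 2 : ℝ) : ℂ) ≠ 0 := by
      rw [Complex.ofReal_ne_zero]
      nlinarith [norm_nonneg z]
    have h : ((π:ℂ)) ≠ 0 := Complex.ofReal_ne_zero.mpr hπ
    generalize hA : ((1 - ‖z‖ ^ 2 : ℝ) : ℂ) = a at hne ⊢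
    field_simp
  -- Part 2
  · have hd2 : DiffContOnCl ℂ (fun w => (w - z) / (1 - c * w) ^ 3) (ball (0:ℂ) 1) := by
      apply DifferentiableOn.diffContOnCl
      rw [closure_ball (0:ℂ) one_ne_zero]
      apply DifferentiableOn.div
      · exact differentiableOn_id.sub (differentiableOn_const _)
      · exact (((differentiableOn_const _).sub ((differentiableOn_const _).mul differentiableOn_id)).pow 3)
      · intro w hw
        exact pow_ne_zero 3 (hden w (by simpa [Complex.dist_eq] using mem_closedBall.mp hw))
    have key2 : (∮ w in C(0, 1), (w - z) / (1 - c * w) ^ 3) = 0 := by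
      apply Complex.circleIntegral_eq_zero_of_differentiable_on_off_countable zero_le_one
        Set.countable_empty
      · rw [← closure_ball (0:ℂ) one_ne_zero]; exact hd2.continuousOn
      · intro x hx; exact hd2.differentiableAt isOpen_ball hx.1
    rw [circleIntegral] at key2
    have hpt2 : ∀ u ∈ Set.uIcc (0:ℝ) (2*π),
        ((Complex.exp (u * Complex.I) - z) / (1 - c * Complex.exp (u * Complex.I))) *
          (Complex.exp (-(u : ℂ) * Complex.I) /
            (c - Complex.exp (-(u : ℂ) * Complex.I)) ^ 2)
        = Complex.I⁻¹ * (deriv (circleMap 0 1) u • ((circleMap 0 1 u - z) / (1 - c * circleMap 0 1 u) ^ 3)) := by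
      intro u _
      have hne0 : Complex.exp (u * Complex.I) ≠ 0 := Complex.exp_ne_zero _
      have hnec : 1 - c * Complex.exp (u * Complex.I) ≠ 0 := hden _ (le_of_eq (habs u))
      have hexp : Complex.exp (-(u : ℂ) * Complex.I) = (Complex.exp (u * Complex.I))⁻¹ := by
        rw [neg_mul, Complex.exp_neg]
      simp only [deriv_circleMap, circleMap, smul_eq_mul, Complex.ofReal_one, one_mul,
        Complex.ofReal_zero, zero_add]
      rw [hexp]
      have h5 : (c - (Complex.exp (u * Complex.I))⁻¹)^2
          = (1 - c * Complex.exp (u * Complex.I))^2 / (Complex.exp (u * Complex.I))^2 := by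
        field_simp; ring
      rw [h5, div_div_eq_mul_div]
      field_simp [hne0, hnec]
    rw [intervalIntegral.integral_congr hpt2, intervalIntegral.integral_const_mul, key2]
    simp
end

section
/- With F, B, z as above, the mixed derivative satisfies ∂²F/∂z̄∂t at (0, z, z): d/dt F_z̄(t, z, w)|_{t=0, w=z} = (1/2π) · (1 − |z|²) ∫₀^{2π} i e^{2iu} B(u) / (1 − z̄ e^{iu})⁴ du, where F_z̄(t,z,w) = (1/2π)∫₀^{2π} ((h_t(e^{iu}) − w)/(1 − w̄ h_t(e^{iu}))) e^{−iu}/(z̄ − e^{−iu})² du. -/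
open Complex Real MeasureTheory

set_option maxHeartbeats 1000000 in
/-- With `h_t(e^{iu}) = e^{iu} + t i e^{iu} B(u) + o(t)` (uniformly in `u`, `B` bounded
measurable, `h_0 = id`) and `z ∈ 𝔻`, the mixed derivative of the Douady–Earle functional:
`d/dt F_z̄(t,z,w)|_{t=0, w=z} = (1/2π)(1−|z|²) ∫₀^{2π} i e^{2iu} B(u)/(1−z̄e^{iu})⁴ du`,
where `F_z̄(t,z,w) = (1/2π)∫₀^{2π} ((h_t(e^{iu})−w)/(1−w̄h_t(e^{iu}))) e^{−iu}/(z̄−e^{−iu})² du`. -/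
theorem stmt13 (h : ℝ → ℝ → ℂ) (B : ℝ → ℝ) (M : ℝ)
    (hBmeas : Measurable B) (hBbd : ∀ u, |B u| ≤ M)
    (hmeas : ∀ t, Measurable (h t))
    (hcirc : ∀ t u, ‖h t u‖ = 1)
    (h0 : ∀ u : ℝ, h 0 u = Complex.exp (u * Complex.I))
    (hder : ∀ ε > (0:ℝ), ∃ δ > (0:ℝ), ∀ t : ℝ, |t| < δ → ∀ u : ℝ,
      ‖h t u - Complex.exp (u * Complex.I)
          - (t : ℂ) * Complex.I * Complex.exp (u * Complex.I) * (B u : ℝ)‖ ≤ ε * |t|)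
    (z : ℂ) (hz : ‖z‖ < 1) :
    HasDerivAt
      (fun t : ℝ => (1 / (2 * Real.pi) : ℂ) * ∫ u in (0:ℝ)..(2 * Real.pi),
        ((h t u - z) / (1 - (starRingEnd ℂ) z * h t u)) *
          (Complex.exp (-(u : ℂ) * Complex.I) /
            ((starRingEnd ℂ) z - Complex.exp (-(u : ℂ) * Complex.I)) ^ 2))
      ((1 / (2 * Real.pi) : ℂ) * ((1 - ‖z‖ ^ 2 : ℝ) : ℂ) *
        ∫ u in (0:ℝ)..(2 * Real.pi),
          Complex.I * Complex.exp (2 * (u : ℂ) * Complex.I) * (B u : ℝ) /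
            (1 - (starRingEnd ℂ) z * Complex.exp (u * Complex.I)) ^ 4)
      0 := by
  have hπ : (0:ℝ) < 2 * Real.pi := by positivity
  set c : ℂ := (starRingEnd ℂ) z with hcdef
  set r : ℝ := ‖z‖ with hrdef
  have hr0 : 0 ≤ r := norm_nonneg z
  have hr1 : r < 1 := hz
  have habsc : ‖c‖ = r := by rw [hcdef, hrdef]; exact Complex.norm_conj z
  set d : ℝ := 1 - r with hddef
  have hd0 : 0 < d := by rw [hddef]; linarith
  have hM0 : 0 ≤ M := le_trans (abs_nonneg _) (hBbd 0)
  -- lower bounds for the denominators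
  have hlow1 : ∀ a : ℂ, ‖a‖ = 1 → d ≤ ‖1 - c * a‖ := by
    intro a ha
    have h1 : ‖c * a‖ = r := by rw [norm_mul, habsc, ha, mul_one]
    have h2 := norm_sub_norm_le (1:ℂ) (c * a)
    simp only [norm_one] at h2
    rw [h1] at h2
    rw [hddef]; linarith
  have hlow2 : ∀ a : ℂ, ‖a‖ = 1 → d ≤ ‖c - a‖ := by
    intro a ha
    have h2 := norm_sub_norm_le a c
    rw [ha, habsc] at h2
    rw [norm_sub_rev c a, hddef]; linarith
  have hne1 : ∀ a : ℂ, ‖a‖ = 1 → 1 - c * a ≠ 0 := by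
    intro a ha hcon
    have := hlow1 a ha
    rw [hcon, norm_zero] at this
    linarith
  have hne2 : ∀ a : ℂ, ‖a‖ = 1 → c - a ≠ 0 := by
    intro a ha hcon
    have := hlow2 a ha
    rw [hcon, norm_zero] at this
    linarith
  -- circle facts
  have hexp1 : ∀ u : ℝ, ‖Complex.exp ((u:ℂ) * Complex.I)‖ = 1 := fun u =>
    Complex.norm_exp_ofReal_mul_I u
  have hexpn1 : ∀ u : ℝ, ‖Complex.exp (-(u:ℂ) * Complex.I)‖ = 1 := by
    intro u
    have he : (-(u:ℂ)) * Complex.I = ((-u : ℝ) : ℂ) * Complex.I := by push_cast; ring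
    rw [he]
    exact Complex.norm_exp_ofReal_mul_I (-u)
  -- rewrite of the kernel
  have hKid : ∀ u : ℝ,
      Complex.exp (-(u:ℂ) * Complex.I) / (c - Complex.exp (-(u:ℂ) * Complex.I)) ^ 2
        = Complex.exp ((u:ℂ) * Complex.I) / (1 - c * Complex.exp ((u:ℂ) * Complex.I)) ^ 2 := by
    intro u
    have hw0 : Complex.exp ((u:ℂ) * Complex.I) ≠ 0 := Complex.exp_ne_zero _
    have h1 : 1 - c * Complex.exp ((u:ℂ) * Complex.I) ≠ 0 := hne1 _ (hexp1 u)
    have h2 : c - Complex.exp (-(u:ℂ) * Complex.I) ≠ 0 := hne2 _ (hexpn1 u)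
    have hinv : Complex.exp (-(u:ℂ) * Complex.I) = (Complex.exp ((u:ℂ) * Complex.I))⁻¹ := by
      rw [neg_mul, Complex.exp_neg]
    rw [hinv] at h2 ⊢
    rw [div_eq_div_iff (pow_ne_zero 2 h2) (pow_ne_zero 2 h1)]
    field_simp
    ring
  have hP : ((1 - ‖z‖ ^ 2 : ℝ) : ℂ) = 1 - z * c := by
    rw [hcdef, Complex.mul_conj, ← Complex.sq_norm]
    push_cast
    ring
  have he2 : ∀ u : ℝ, Complex.exp (2 * (u:ℂ) * Complex.I)
      = Complex.exp ((u:ℂ) * Complex.I) * Complex.exp ((u:ℂ) * Complex.I) := by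
    intro u
    rw [← Complex.exp_add]
    ring_nf
  -- the integrands
  set g : ℝ → ℝ → ℂ := fun t u =>
    ((h t u - z) / (1 - c * h t u)) *
      (Complex.exp (-(u : ℂ) * Complex.I) /
        (c - Complex.exp (-(u : ℂ) * Complex.I)) ^ 2) with hgdef
  set D : ℝ → ℂ := fun u =>
    ((1 - ‖z‖ ^ 2 : ℝ) : ℂ) *
      (Complex.I * Complex.exp (2 * (u : ℂ) * Complex.I) * ((B u : ℝ) : ℂ) /
        (1 - c * Complex.exp ((u:ℝ) * Complex.I)) ^ 4) with hDdef
  -- integrability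
  have hfin : volume (Set.uIoc (0:ℝ) (2 * Real.pi)) < ⊤ := by
    rw [Set.uIoc_of_le hπ.le]
    exact measure_Ioc_lt_top
  have hintg : ∀ t, IntervalIntegrable (g t) volume 0 (2 * Real.pi) := by
    intro t
    rw [intervalIntegrable_iff]
    have hm : Measurable (g t) := by
      rw [hgdef]
      have := hmeas t
      fun_prop
    apply MeasureTheory.Integrable.mono' (g := fun _ => 2 / d * (1 / d ^ 2))
      (integrableOn_const hfin.ne) hm.aestronglyMeasurable.restrict
    filter_upwards with u
    simp only [hgdef]
    rw [norm_mul, norm_div, norm_div, norm_pow, hexpn1 u]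
    have h1 : ‖h t u - z‖ ≤ 2 := by
      have := norm_sub_le (h t u) z
      rw [hcirc t u] at this
      rw [← hrdef] at this
      linarith
    have h2 : d ≤ ‖1 - c * h t u‖ := hlow1 _ (hcirc t u)
    have h3 : d ^ 2 ≤ ‖c - Complex.exp (-(u:ℂ) * Complex.I)‖ ^ 2 :=
      pow_le_pow_left₀ hd0.le (hlow2 _ (hexpn1 u)) 2
    have hden2 : (0:ℝ) < d ^ 2 := by positivity
    exact mul_le_mul (div_le_div₀ (by norm_num) h1 hd0 h2)
      (div_le_div₀ (by norm_num) le_rfl hden2 h3)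
      (by positivity) (by positivity)
  have hintD : IntervalIntegrable D volume 0 (2 * Real.pi) := by
    rw [intervalIntegrable_iff]
    have hm : Measurable D := by
      rw [hDdef]
      fun_prop
    apply MeasureTheory.Integrable.mono' (g := fun _ => 1 * (M / d ^ 4))
      (integrableOn_const hfin.ne) hm.aestronglyMeasurable.restrict
    filter_upwards with u
    simp only [hDdef]
    rw [norm_mul, norm_div]
    have habs2u : ‖Complex.exp (2 * (u:ℂ) * Complex.I)‖ = 1 := by
      rw [he2 u, norm_mul, hexp1 u, mul_one]
    have hnum : ‖Complex.I * Complex.exp (2 * (u:ℂ) * Complex.I) * ((B u : ℝ):ℂ)‖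
        ≤ M := by
      rw [norm_mul, norm_mul, Complex.norm_I, habs2u, Complex.norm_real, Real.norm_eq_abs, one_mul, one_mul]
      exact hBbd u
    have hP1 : ‖((1 - ‖z‖ ^ 2 : ℝ) : ℂ)‖ ≤ 1 := by
      rw [Complex.norm_real, Real.norm_eq_abs, ← hrdef]
      rw [_root_.abs_of_nonneg (by nlinarith)]
      nlinarith
    have hden : d ^ 4 ≤ ‖(1 - c * Complex.exp ((u:ℝ) * Complex.I)) ^ 4‖ := by
      rw [norm_pow]
      exact pow_le_pow_left₀ hd0.le (hlow1 _ (hexp1 u)) 4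
    exact mul_le_mul hP1 (div_le_div₀ hM0 hnum (by positivity) hden)
      (by positivity) (by norm_num)
  -- key pointwise decomposition
  have hkey : ∀ t u,
      g t u - g 0 u - t • D u =
      ((1 - z * c) * (Complex.exp ((u:ℂ) * Complex.I) /
          (1 - c * Complex.exp ((u:ℂ) * Complex.I)) ^ 2)) *
        (c * (h t u - Complex.exp ((u:ℂ) * Complex.I)) ^ 2 /
            ((1 - c * h t u) * (1 - c * Complex.exp ((u:ℂ) * Complex.I)) ^ 2)
          + (h t u - Complex.exp ((u:ℂ) * Complex.I)
              - (t:ℂ) * Complex.I * Complex.exp ((u:ℂ) * Complex.I) * ((B u : ℝ):ℂ)) /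
            (1 - c * Complex.exp ((u:ℂ) * Complex.I)) ^ 2) := by
    intro t u
    have hw0 : Complex.exp ((u:ℂ) * Complex.I) ≠ 0 := Complex.exp_ne_zero _
    have h1 : 1 - c * h t u ≠ 0 := hne1 _ (hcirc t u)
    have h2 : 1 - c * Complex.exp ((u:ℂ) * Complex.I) ≠ 0 := hne1 _ (hexp1 u)
    simp only [hgdef, hDdef, h0, hKid u, hP, Complex.real_smul, he2 u]
    obtain ⟨p, hp⟩ : ∃ p, (1:ℂ) - c * h t u = p := ⟨_, rfl⟩
    obtain ⟨q, hq⟩ : ∃ q, (1:ℂ) - c * Complex.exp ((u:ℂ) * Complex.I) = q := ⟨_, rfl⟩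
    rw [hp, hq]
    have hp0 : p ≠ 0 := hp ▸ h1
    have hq0 : q ≠ 0 := hq ▸ h2
    field_simp
    rw [← hp, ← hq]
    ring
  -- constants
  set C1 : ℝ := 2 * (M + 1) ^ 2 / d ^ 5 with hC1def
  set C2 : ℝ := 2 / d ^ 4 with hC2def
  have hC1pos : 0 < C1 := by rw [hC1def]; positivity
  have hC2pos : 0 < C2 := by rw [hC2def]; positivity
  -- main derivative statement for the unscaled integral
  have main : HasDerivAt (fun t => ∫ u in (0:ℝ)..(2 * Real.pi), g t u)
      (∫ u in (0:ℝ)..(2 * Real.pi), D u) 0 := by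
    rw [hasDerivAt_iff_isLittleO]
    simp only [sub_zero]
    rw [Asymptotics.isLittleO_iff]
    intro κ hκ
    have hεpos : (0:ℝ) < min 1 (κ / (4 * Real.pi * C2)) := by positivity
    obtain ⟨δ, hδ0, hδ⟩ := hder (min 1 (κ / (4 * Real.pi * C2))) hεpos
    set ε : ℝ := min 1 (κ / (4 * Real.pi * C2)) with hεdef
    have hε1 : ε ≤ 1 := min_le_left _ _
    have hε2 : ε ≤ κ / (4 * Real.pi * C2) := min_le_right _ _
    rw [Metric.eventually_nhds_iff]
    refine ⟨min δ (κ / (4 * Real.pi * C1)), by positivity, ?_⟩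
    intro t ht
    rw [Real.dist_eq, sub_zero] at ht
    have ht1 : |t| < δ := lt_of_lt_of_le ht (min_le_left _ _)
    have ht2 : |t| ≤ κ / (4 * Real.pi * C1) := le_of_lt (lt_of_lt_of_le ht (min_le_right _ _))
    -- pointwise bound
    have hptw : ∀ u, ‖g t u - g 0 u - t • D u‖ ≤ C1 * t ^ 2 + C2 * ε * |t| := by
      intro u
      have hw0 : Complex.exp ((u:ℂ) * Complex.I) ≠ 0 := Complex.exp_ne_zero _
      have h1 : d ≤ ‖1 - c * h t u‖ := hlow1 _ (hcirc t u)
      have h2 : d ≤ ‖1 - c * Complex.exp ((u:ℂ) * Complex.I)‖ := hlow1 _ (hexp1 u)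
      have hR := hδ t ht1 u
      -- |a - w| ≤ (M+1)|t|
      have hbt : ‖(t:ℂ) * Complex.I * Complex.exp ((u:ℂ) * Complex.I) * ((B u : ℝ):ℂ)‖
          ≤ M * |t| := by
        rw [norm_mul, norm_mul, norm_mul, Complex.norm_real, Real.norm_eq_abs, Complex.norm_I, hexp1 u,
          Complex.norm_real, Real.norm_eq_abs, mul_one, mul_one]
        rw [mul_comm]
        exact mul_le_mul_of_nonneg_right (hBbd u) (abs_nonneg t)
      have hA : ‖h t u - Complex.exp ((u:ℂ) * Complex.I)‖ ≤ (M + 1) * |t| := by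
        have hsplit : h t u - Complex.exp ((u:ℂ) * Complex.I)
            = ((t:ℂ) * Complex.I * Complex.exp ((u:ℂ) * Complex.I) * ((B u : ℝ):ℂ))
              + (h t u - Complex.exp ((u:ℂ) * Complex.I)
                - (t:ℂ) * Complex.I * Complex.exp ((u:ℂ) * Complex.I) * ((B u : ℝ):ℂ)) := by
          ring
        rw [hsplit]
        refine le_trans (norm_add_le _ _) ?_
        have : ε * |t| ≤ 1 * |t| := mul_le_mul_of_nonneg_right hε1 (abs_nonneg t)
        nlinarith [hbt, hR]
      rw [hkey t u]
      rw [norm_mul]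
      have hPb : ‖1 - z * c‖ ≤ 2 := by
        have := norm_sub_le (1:ℂ) (z * c)
        simp only [norm_one] at this
        rw [norm_mul, habsc, ← hrdef] at this
        nlinarith
      have hKb : ‖Complex.exp ((u:ℂ) * Complex.I) /
          (1 - c * Complex.exp ((u:ℂ) * Complex.I)) ^ 2‖ ≤ 1 / d ^ 2 := by
        rw [norm_div, norm_pow, hexp1 u]
        exact div_le_div₀ (by norm_num) le_rfl (by positivity)
          (pow_le_pow_left₀ hd0.le h2 2)
      have hT1 : ‖c * (h t u - Complex.exp ((u:ℂ) * Complex.I)) ^ 2 /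
            ((1 - c * h t u) * (1 - c * Complex.exp ((u:ℂ) * Complex.I)) ^ 2)‖
          ≤ ((M + 1) * |t|) ^ 2 / (d * d ^ 2) := by
        rw [norm_div, norm_mul, norm_pow, norm_mul, norm_pow]
        apply div_le_div₀ (by positivity) ?_ (by positivity) ?_
        · calc ‖c‖ * ‖h t u - Complex.exp ((u:ℂ) * Complex.I)‖ ^ 2
              ≤ 1 * ((M + 1) * |t|) ^ 2 := by
                apply mul_le_mul (by rw [habsc]; linarith)
                  (pow_le_pow_left₀ (norm_nonneg _) hA 2) (by positivity) (by norm_num)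
            _ = ((M + 1) * |t|) ^ 2 := one_mul _
        · exact mul_le_mul h1 (pow_le_pow_left₀ hd0.le h2 2) (by positivity)
            (norm_nonneg _)
      have hT2 : ‖(h t u - Complex.exp ((u:ℂ) * Complex.I)
            - (t:ℂ) * Complex.I * Complex.exp ((u:ℂ) * Complex.I) * ((B u : ℝ):ℂ)) /
            (1 - c * Complex.exp ((u:ℂ) * Complex.I)) ^ 2‖
          ≤ ε * |t| / d ^ 2 := by
        rw [norm_div, norm_pow]
        exact div_le_div₀ (by positivity) hR (by positivity) (pow_le_pow_left₀ hd0.le h2 2)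
      have hcomb : ‖(1 - z * c) * (Complex.exp ((u:ℂ) * Complex.I) /
            (1 - c * Complex.exp ((u:ℂ) * Complex.I)) ^ 2)‖
            * ‖c * (h t u - Complex.exp ((u:ℂ) * Complex.I)) ^ 2 /
              ((1 - c * h t u) * (1 - c * Complex.exp ((u:ℂ) * Complex.I)) ^ 2)
            + (h t u - Complex.exp ((u:ℂ) * Complex.I)
                - (t:ℂ) * Complex.I * Complex.exp ((u:ℂ) * Complex.I) * ((B u : ℝ):ℂ)) /
              (1 - c * Complex.exp ((u:ℂ) * Complex.I)) ^ 2‖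
          ≤ (2 * (1 / d ^ 2)) * (((M + 1) * |t|) ^ 2 / (d * d ^ 2) + ε * |t| / d ^ 2) := by
        apply mul_le_mul ?_ ?_ (norm_nonneg _) (by positivity)
        · rw [norm_mul]
          exact mul_le_mul hPb hKb (norm_nonneg _) (by norm_num)
        · exact le_trans (norm_add_le _ _) (add_le_add hT1 hT2)
      refine le_trans hcomb ?_
      have heq : (2 * (1 / d ^ 2)) * (((M + 1) * |t|) ^ 2 / (d * d ^ 2) + ε * |t| / d ^ 2)
          = C1 * t ^ 2 + C2 * ε * |t| := by
        rw [hC1def, hC2def, mul_pow, _root_.sq_abs]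
        field_simp
      rw [heq]
    -- put the integrals together
    have hsmul : IntervalIntegrable (fun u => t • D u) volume 0 (2 * Real.pi) :=
      hintD.smul t
    have hint : (∫ u in (0:ℝ)..(2 * Real.pi), g t u) - (∫ u in (0:ℝ)..(2 * Real.pi), g 0 u)
        - t • (∫ u in (0:ℝ)..(2 * Real.pi), D u)
        = ∫ u in (0:ℝ)..(2 * Real.pi), (g t u - g 0 u - t • D u) := by
      rw [← intervalIntegral.integral_smul, ← intervalIntegral.integral_sub (hintg t) (hintg 0),
        ← intervalIntegral.integral_sub ((hintg t).sub (hintg 0)) hsmul]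
    rw [hint]
    refine le_trans (intervalIntegral.norm_integral_le_of_norm_le_const
      (C := C1 * t ^ 2 + C2 * ε * |t|) (fun u _ => hptw u)) ?_
    rw [sub_zero, abs_of_pos hπ, Real.norm_eq_abs]
    have hb1 : |t| * (4 * Real.pi * C1) ≤ κ := by
      rw [← le_div_iff₀ (by positivity)]
      exact ht2
    have hb2 : ε * (4 * Real.pi * C2) ≤ κ := by
      rw [← le_div_iff₀ (by positivity)]
      exact hε2
    have hb1' := mul_le_mul_of_nonneg_right hb1 (abs_nonneg t)
    have hb2' := mul_le_mul_of_nonneg_right hb2 (abs_nonneg t)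
    have e1 : (C1 * t ^ 2 + C2 * ε * |t|) * (2 * Real.pi)
        = |t| * (4 * Real.pi * C1) * |t| / 2 + ε * (4 * Real.pi * C2) * |t| / 2 := by
      rw [← _root_.sq_abs t]; ring
    rw [e1]
    linarith
  -- conclude
  have final := main.const_mul ((1 / (2 * Real.pi) : ℂ))
  have hDint : (∫ u in (0:ℝ)..(2 * Real.pi), D u)
      = ((1 - ‖z‖ ^ 2 : ℝ) : ℂ) *
        ∫ u in (0:ℝ)..(2 * Real.pi),
          Complex.I * Complex.exp (2 * (u : ℂ) * Complex.I) * ((B u : ℝ):ℂ) /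
            (1 - c * Complex.exp ((u:ℝ) * Complex.I)) ^ 4 := by
    simp only [hDdef]
    exact intervalIntegral.integral_const_mul _ _
  rw [hDint] at final
  rw [mul_assoc]
  exact final
end

section
/- Let λ be a finite positive measure on 𝔻 of the form λ = ℓ(w) dudv with ℓ ≥ 0 locally integrable, and define for α, β > 0 the function λ̃(z) = ∬_𝔻 (1 − |z|²)^α (1 − |w|²)^β / |1 − z̄w|^{α+β+2} · ℓ(w) dudv. If ℓ(w) dudv is a Carleson measure on 𝔻 with Carleson norm ‖λ‖_c, then λ̃(z) dxdy is a Carleson measure on 𝔻 and ‖λ̃‖_c ≤ C(α, β) ‖λ‖_c for a constant depending only on α and β. -/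
open Complex MeasureTheory Metric Set Real
open scoped ENNReal NNReal

noncomputable def s19ker (α β : ℝ) (z w : ℂ) : ℝ :=
  (1 - ‖z‖ ^ 2) ^ α * (1 - ‖w‖ ^ 2) ^ β /
    ‖1 - (starRingEnd ℂ) z * w‖ ^ (α + β + 2)

lemma s19_meas (α β : ℝ) (hα : 0 ≤ α) (hβ : 0 ≤ β) :
    Measurable (fun p : ℂ × ℂ => s19ker α β p.1 p.2) := by
  unfold s19ker
  apply Measurable.div
  · apply Measurable.mul
    · exact ((continuous_const.sub ((continuous_norm.comp continuous_fst).pow 2)).rpow_const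
        (fun _ => .inr hα)).measurable
    · exact ((continuous_const.sub ((continuous_norm.comp continuous_snd).pow 2)).rpow_const
        (fun _ => .inr hβ)).measurable
  · exact ((continuous_norm.comp
      (continuous_const.sub ((continuous_star.comp continuous_fst).mul continuous_snd))).rpow_const
        (fun _ => .inr (by linarith))).measurable

lemma s19_lb0 (z w : ℂ) :
    1 - ‖z‖ * ‖w‖ ≤ ‖1 - (starRingEnd ℂ) z * w‖ := by
  have h1 : (1:ℝ) ≤ ‖1 - (starRingEnd ℂ) z * w‖ + ‖z‖ * ‖w‖ := by
    have := norm_add_le (1 - (starRingEnd ℂ) z * w) ((starRingEnd ℂ) z * w)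
    simpa [norm_mul, Complex.norm_conj] using this
  linarith

lemma s19_lb1 (z w : ℂ) (hz : ‖z‖ ≤ 1) (hw : ‖w‖ ≤ 1) :
    1 - ‖z‖ ^ 2 ≤ 2 * ‖1 - (starRingEnd ℂ) z * w‖ := by
  have h1 := s19_lb0 z w
  have hz0 := norm_nonneg z
  have hw0 := norm_nonneg w
  nlinarith [norm_nonneg (1 - (starRingEnd ℂ) z * w)]

lemma s19_ident (z w : ℂ) :
    ‖1 - (starRingEnd ℂ) z * w‖ ^ 2 =
      (1 - ‖z‖ ^ 2) * (1 - ‖w‖ ^ 2) + ‖z - w‖ ^ 2 := by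
  simp only [Complex.sq_norm]
  simp only [Complex.normSq_apply, Complex.sub_re, Complex.sub_im, Complex.mul_re,
    Complex.mul_im, Complex.one_re, Complex.one_im, Complex.conj_re, Complex.conj_im]
  ring

lemma s19_lb3 (z w : ℂ) (hz : ‖z‖ ≤ 1) (hw : ‖w‖ ≤ 1) :
    ‖z - w‖ ≤ ‖1 - (starRingEnd ℂ) z * w‖ := by
  have h1 : 0 ≤ 1 - ‖z‖ ^ 2 := by nlinarith [norm_nonneg z]
  have h2 : 0 ≤ 1 - ‖w‖ ^ 2 := by nlinarith [norm_nonneg w]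
  have key : ‖z - w‖ ^ 2 ≤ ‖1 - (starRingEnd ℂ) z * w‖ ^ 2 := by
    nlinarith [s19_ident z w, mul_nonneg h1 h2]
  nlinarith [norm_nonneg (z - w), norm_nonneg (1 - (starRingEnd ℂ) z * w)]

lemma s19_symm (z w : ℂ) :
    ‖1 - (starRingEnd ℂ) z * w‖ = ‖1 - (starRingEnd ℂ) w * z‖ := by
  rw [← Complex.norm_conj (1 - (starRingEnd ℂ) z * w)]
  simp [map_mul, mul_comm]

lemma s19_Mpos (z w : ℂ) (hz : ‖z‖ < 1) (hw : ‖w‖ ≤ 1) :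
    0 < ‖1 - (starRingEnd ℂ) z * w‖ := by
  have := s19_lb1 z w hz.le hw
  nlinarith [norm_nonneg z]

lemma s19ker_nonneg (α β : ℝ) (z w : ℂ) (hz : ‖z‖ ≤ 1) (hw : ‖w‖ ≤ 1) :
    0 ≤ s19ker α β z w := by
  have h1 : 0 ≤ 1 - ‖z‖ ^ 2 := by nlinarith [norm_nonneg z]
  have h2 : 0 ≤ 1 - ‖w‖ ^ 2 := by nlinarith [norm_nonneg w]
  exact div_nonneg (mul_nonneg (Real.rpow_nonneg h1 _) (Real.rpow_nonneg h2 _))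
    (Real.rpow_nonneg (norm_nonneg _) _)

/-- far bound : if `t ≤ |z-w|` then `ker ≤ 2^(α+β) / t^2`. -/
lemma s19ker_le_far (α β : ℝ) (hα : 0 < α) (hβ : 0 < β) (z w : ℂ)
    (hz : ‖z‖ < 1) (hw : ‖w‖ < 1) {t : ℝ} (ht : 0 < t)
    (hzw : t ≤ ‖z - w‖) :
    s19ker α β z w ≤ 2 ^ (α + β) / t ^ 2 := by
  set A := 1 - ‖z‖ ^ 2 with hA
  set B := 1 - ‖w‖ ^ 2 with hB
  set M := ‖1 - (starRingEnd ℂ) z * w‖ with hM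
  have hA0 : 0 < A := by nlinarith [norm_nonneg z]
  have hB0 : 0 < B := by nlinarith [norm_nonneg w]
  have hM0 : 0 < M := s19_Mpos z w hz hw.le
  have hMA : A / 2 ≤ M := by have := s19_lb1 z w hz.le hw.le; linarith
  have hMB : B / 2 ≤ M := by
    have := s19_lb1 w z hw.le hz.le; rw [← s19_symm] at this; linarith
  have hMt : t ≤ M := hzw.trans (s19_lb3 z w hz.le hw.le)
  have hsplit : M ^ (α + β + 2) = M ^ α * M ^ β * M ^ 2 := by
    rw [Real.rpow_add hM0, Real.rpow_add hM0]
    norm_num [Real.rpow_two]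
  have hden : (A/2) ^ α * (B/2) ^ β * t ^ 2 ≤ M ^ (α + β + 2) := by
    rw [hsplit]
    have h1 : (A/2) ^ α ≤ M ^ α := Real.rpow_le_rpow (by positivity) hMA hα.le
    have h2 : (B/2) ^ β ≤ M ^ β := Real.rpow_le_rpow (by positivity) hMB hβ.le
    have h3 : t ^ 2 ≤ M ^ 2 := by nlinarith
    gcongr
  have hnum : 0 ≤ A ^ α * B ^ β := by positivity
  calc s19ker α β z w = A ^ α * B ^ β / M ^ (α + β + 2) := rfl
    _ ≤ A ^ α * B ^ β / ((A/2) ^ α * (B/2) ^ β * t ^ 2) := by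
        apply div_le_div_of_nonneg_left hnum (by positivity) hden
    _ = 2 ^ (α + β) / t ^ 2 := by
        rw [Real.div_rpow hA0.le (by norm_num), Real.div_rpow hB0.le (by norm_num),
          Real.rpow_add (by norm_num : (0:ℝ) < 2)]
        have h4 : A ^ α ≠ 0 := by positivity
        have h5 : B ^ β ≠ 0 := by positivity
        have h6 : (2:ℝ) ^ α ≠ 0 := by positivity
        have h7 : (2:ℝ) ^ β ≠ 0 := by positivity
        field_simp

/-- annulus bound -/
lemma s19ker_le_ann (α β : ℝ) (hα : 0 < α) (hβ : 0 < β) (z w : ℂ)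
    (hz : ‖z‖ < 1) (hw : ‖w‖ < 1) {s u : ℝ} (hs : 0 < s)
    (h1 : s ≤ ‖1 - (starRingEnd ℂ) z * w‖)
    (h2 : ‖1 - (starRingEnd ℂ) z * w‖ ≤ u) :
    s19ker α β z w ≤ (2*u) ^ α * (1 - ‖w‖ ^ 2) ^ β / s ^ (α + β + 2) := by
  set A := 1 - ‖z‖ ^ 2 with hA
  set B := 1 - ‖w‖ ^ 2 with hB
  set M := ‖1 - (starRingEnd ℂ) z * w‖ with hM
  have hA0 : 0 < A := by nlinarith [norm_nonneg z]
  have hB0 : 0 < B := by nlinarith [norm_nonneg w]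
  have hAu : A ≤ 2*u := by have := s19_lb1 z w hz.le hw.le; linarith
  have hu : 0 < u := lt_of_lt_of_le (hs.trans_le h1) h2
  have hnum : A ^ α * B ^ β ≤ (2*u) ^ α * B ^ β := by
    have := Real.rpow_le_rpow hA0.le hAu hα.le
    gcongr
  have hden : s ^ (α + β + 2) ≤ M ^ (α + β + 2) :=
    Real.rpow_le_rpow hs.le h1 (by linarith)
  exact div_le_div₀ (by positivity) hnum (by positivity) hden

lemma s19_rpow4 : (2:ℝ) ^ (4:ℝ) = 16 := by
  rw [show (4:ℝ) = ((4:ℕ):ℝ) by norm_num, Real.rpow_natCast]; norm_num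

lemma s19_g (α β δ : ℝ) (hδ : 0 < δ) (j : ℕ) :
    π * (2^(j+1)*δ)^2 * ((2*(2^j*δ))^α * δ^β / (2^j*(δ/2))^(α+β+2))
      = π * 2^(2*α+β+4) * ((2:ℝ)^(-β))^j := by
  have h2 : (0:ℝ) < 2 := by norm_num
  induction j with
  | zero =>
    simp only [pow_zero, pow_one, one_mul]
    have h24 : (2:ℝ)^(2*α+β+4) = (2:ℝ)^α * 2^α * 2^β * 16 := by
      rw [show 2*α+β+4 = α+(α+(β+4)) by ring, Real.rpow_add h2, Real.rpow_add h2,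
        Real.rpow_add h2, s19_rpow4]
      ring
    have hδe : δ^(α+β+2) = δ^α * δ^β * δ^2 := by
      rw [show α+β+2 = α+(β+2) by ring, Real.rpow_add hδ, Real.rpow_add hδ, Real.rpow_two]
      ring
    rw [Real.mul_rpow h2.le hδ.le, Real.div_rpow hδ.le h2.le, hδe, h24,
      show (2:ℝ)^(α+β+2) = 2^α * 2^β * 4 by
        rw [show α+β+2 = α+(β+2) by ring, Real.rpow_add h2, Real.rpow_add h2, Real.rpow_two]
        ring]
    have n1 : δ^α ≠ 0 := by positivity
    have n2 : δ^β ≠ 0 := by positivity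
    have n3 : (2:ℝ)^α ≠ 0 := by positivity
    have n4 : (2:ℝ)^β ≠ 0 := by positivity
    field_simp
    ring
  | succ j ih =>
    have e1 : (2:ℝ)^(j+1+1) * δ = 2*(2^(j+1)*δ) := by rw [pow_succ]; ring
    have e2 : 2*((2:ℝ)^(j+1)*δ) = 2*(2*(2^j*δ)) := by rw [pow_succ]; ring
    have e3 : (2:ℝ)^(j+1)*(δ/2) = 2*(2^j*(δ/2)) := by rw [pow_succ]; ring
    have p1 : (0:ℝ) ≤ 2*(2^j*δ) := by positivity
    have p2 : (0:ℝ) ≤ 2^j*(δ/2) := by positivity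
    rw [e1, e2, e3, Real.mul_rpow h2.le p1, Real.mul_rpow h2.le p2,
      show (2:ℝ)^(α+β+2) = 2^α * 2^β * 4 by
        rw [show α+β+2 = α+(β+2) by ring, Real.rpow_add h2, Real.rpow_add h2, Real.rpow_two]
        ring]
    have hZ : (0:ℝ) < (2^j*(δ/2))^(α+β+2) := Real.rpow_pos_of_pos (by positivity) _
    have n3 : (2:ℝ)^α ≠ 0 := by positivity
    have n4 : (2:ℝ)^β ≠ 0 := by positivity
    have e4 : (2:ℝ)^(j+1)*δ = 2*(2^j*δ) := by rw [pow_succ]; ring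
    rw [e4] at ih
    have key : π * (2*(2*(2^j*δ)))^2 *
        (2^α * (2*(2^j*δ))^α * δ^β / (2^α * 2^β * 4 * (2^j*(δ/2))^(α+β+2)))
        = (2:ℝ)^(-β) * (π * (2*(2^j*δ))^2 * ((2*(2^j*δ))^α * δ^β / (2^j*(δ/2))^(α+β+2))) := by
      rw [Real.rpow_neg h2.le]
      field_simp
      ring
    rw [key, ih, pow_succ]
    ring

lemma s19_vol (c : ℂ) (R : ℝ) (hR : 0 ≤ R) :
    volume (ball c R) = ENNReal.ofReal (π * R^2) := by
  rw [Complex.volume_ball, ← ENNReal.ofReal_pow hR, mul_comm π, ENNReal.ofReal_mul (by positivity)]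
  congr 1
  rw [← NNReal.coe_real_pi, ENNReal.ofReal_coe_nnreal]

lemma s19_ball_sub (w : ℂ) (hw : 1/2 < ‖w‖) (t : ℝ) :
    {z : ℂ | ‖1 - (starRingEnd ℂ) z * w‖ < t}
      ⊆ ball ((starRingEnd ℂ) w)⁻¹ (2*t) := by
  intro z hz
  simp only [mem_setOf_eq] at hz
  have hw0 : w ≠ 0 := by
    intro h; rw [h] at hw; simp at hw; linarith
  have hcw : (starRingEnd ℂ) w ≠ 0 := by simpa using hw0
  have key : ‖1 - (starRingEnd ℂ) z * w‖
      = ‖w‖ * ‖z - ((starRingEnd ℂ) w)⁻¹‖ := by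
    rw [s19_symm]
    have : 1 - (starRingEnd ℂ) w * z = -((starRingEnd ℂ) w) * (z - ((starRingEnd ℂ) w)⁻¹) := by
      field_simp; ring
    rw [this, norm_mul, norm_neg, Complex.norm_conj]
  rw [mem_ball, Complex.dist_eq]
  rw [key] at hz
  nlinarith [norm_nonneg (z - ((starRingEnd ℂ) w)⁻¹)]

lemma s19_FR (α β : ℝ) (hα : 0 < α) (hβ : 0 < β) :
    ∃ c₁ : ℝ, 0 < c₁ ∧ ∀ w : ℂ, ‖w‖ < 1 →
      ∫⁻ z in ball (0:ℂ) 1, ENNReal.ofReal (s19ker α β z w) ≤ ENNReal.ofReal c₁ := by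
  have h2β1 : (2:ℝ)^(-β) < 1 := Real.rpow_lt_one_of_one_lt_of_neg one_lt_two (by linarith)
  have h2β0 : (0:ℝ) < 2^(-β) := Real.rpow_pos_of_pos (by norm_num) _
  have hden : (0:ℝ) < 1 - 2^(-β) := by linarith
  refine ⟨π * 2^(α+β+2) + π * 2^(2*α+β+4) / (1 - 2^(-β)), by positivity, fun w hw => ?_⟩
  have hw0 := norm_nonneg w
  have hB0 : 0 < 1 - ‖w‖ ^ 2 := by nlinarith
  by_cases hw2 : ‖w‖ ≤ 1/2
  · -- easy case : kernel bounded by 2^(α+β+2)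
    have hb : ∀ z ∈ ball (0:ℂ) 1,
        ENNReal.ofReal (s19ker α β z w) ≤ ENNReal.ofReal (2^(α+β+2)) := by
      intro z hz
      rw [mem_ball, Complex.dist_eq, sub_zero] at hz
      apply ENNReal.ofReal_le_ofReal
      have hz0 := norm_nonneg z
      have hA0 : 0 < 1 - ‖z‖ ^ 2 := by nlinarith
      have hM : (1/2 : ℝ) ≤ ‖1 - (starRingEnd ℂ) z * w‖ := by
        have := s19_lb0 z w; nlinarith
      have h1 : (1 - ‖z‖ ^ 2) ^ α ≤ 1 :=
        Real.rpow_le_one hA0.le (by nlinarith) hα.le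
      have h2 : (1 - ‖w‖ ^ 2) ^ β ≤ 1 :=
        Real.rpow_le_one hB0.le (by nlinarith) hβ.le
      have h3 : ((1:ℝ)/2) ^ (α+β+2) ≤ ‖1 - (starRingEnd ℂ) z * w‖ ^ (α+β+2) :=
        Real.rpow_le_rpow (by norm_num) hM (by linarith)
      have h4 : ((1:ℝ)/2) ^ (α+β+2) = (2 ^ (α+β+2) : ℝ)⁻¹ := by
        rw [one_div, Real.inv_rpow (by norm_num : (0:ℝ) ≤ 2)]
      rw [h4] at h3
      have h5 : (0:ℝ) < (2:ℝ)^(α+β+2) := Real.rpow_pos_of_pos (by norm_num) _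
      have hN : (1 - ‖z‖ ^ 2) ^ α * (1 - ‖w‖ ^ 2) ^ β ≤ 1 :=
        mul_le_one₀ h1 (Real.rpow_nonneg hB0.le _) h2
      have hN0 : 0 ≤ (1 - ‖z‖ ^ 2) ^ α * (1 - ‖w‖ ^ 2) ^ β :=
        mul_nonneg (Real.rpow_nonneg hA0.le _) (Real.rpow_nonneg hB0.le _)
      calc s19ker α β z w ≤ 1 / (2 ^ (α+β+2) : ℝ)⁻¹ :=
            div_le_div₀ zero_le_one hN (by positivity) h3
        _ = 2 ^ (α+β+2) := by field_simp
    calc ∫⁻ z in ball (0:ℂ) 1, ENNReal.ofReal (s19ker α β z w)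
        ≤ ∫⁻ _ in ball (0:ℂ) 1, ENNReal.ofReal (2^(α+β+2)) :=
          setLIntegral_mono' measurableSet_ball hb
      _ = ENNReal.ofReal (2^(α+β+2)) * volume (ball (0:ℂ) 1) := setLIntegral_const _ _
      _ = ENNReal.ofReal (2^(α+β+2)) * ENNReal.ofReal (π * 1^2) := by
          rw [s19_vol _ _ zero_le_one]
      _ ≤ ENNReal.ofReal (π * 2^(α+β+2) + π * 2^(2*α+β+4) / (1 - 2^(-β))) := by
          rw [← ENNReal.ofReal_mul (by positivity)]
          apply ENNReal.ofReal_le_ofReal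
          have : (0:ℝ) < π * 2^(2*α+β+4) / (1 - 2^(-β)) := by positivity
          nlinarith [Real.rpow_pos_of_pos (show (0:ℝ)<2 by norm_num) (α+β+2), Real.pi_pos]
  · push_neg at hw2
    set δ := 1 - ‖w‖ ^ 2 with hδdef
    set V : ℕ → Set ℂ := fun j =>
      ({z | ‖1 - (starRingEnd ℂ) z * w‖ < 2^(j+1)*(δ/2)} \
       {z | ‖1 - (starRingEnd ℂ) z * w‖ < 2^j*(δ/2)}) ∩ ball (0:ℂ) 1 with hV
    have hδ2 : 0 < δ/2 := by positivity
    have hcover : ball (0:ℂ) 1 ⊆ ⋃ j, V j := by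
      intro z hz
      have hz1 : ‖z‖ < 1 := by rwa [mem_ball, Complex.dist_eq, sub_zero] at hz
      set M := ‖1 - (starRingEnd ℂ) z * w‖ with hMdef
      have hM0 : 0 < M := s19_Mpos z w hz1 hw.le
      have hMδ : δ/2 ≤ M := by
        have := s19_lb1 w z hw.le hz1.le
        rw [← s19_symm] at this
        simp only [← hδdef] at this ⊢
        linarith
      have hx : 1 ≤ M / (δ/2) := (one_le_div hδ2).2 hMδ
      obtain ⟨n, hn1, hn2⟩ := exists_nat_pow_near hx one_lt_two
      refine mem_iUnion.2 ⟨n, ⟨⟨?_, ?_⟩, hz⟩⟩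
      · simp only [mem_setOf_eq]
        calc M = (M / (δ/2)) * (δ/2) := by field_simp
          _ < 2^(n+1)*(δ/2) := by exact mul_lt_mul_of_pos_right hn2 hδ2
      · simp only [mem_setOf_eq, not_lt]
        calc (2:ℝ)^n*(δ/2) ≤ (M / (δ/2)) * (δ/2) := mul_le_mul_of_nonneg_right hn1 hδ2.le
          _ = M := by field_simp
    have hmeasV : ∀ j, MeasurableSet (V j) := by
      intro j
      have hc : Continuous fun z : ℂ => ‖1 - (starRingEnd ℂ) z * w‖ :=
        continuous_norm.comp (continuous_const.sub (continuous_star.mul continuous_const))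
      exact (((hc.measurable (measurableSet_Iio)).diff
        (hc.measurable (measurableSet_Iio))).inter measurableSet_ball)
    have hterm : ∀ j : ℕ, ∫⁻ z in V j, ENNReal.ofReal (s19ker α β z w)
        ≤ ENNReal.ofReal (π * 2^(2*α+β+4) * ((2:ℝ)^(-β))^j) := by
      intro j
      set bb : ℝ := (2*(2^j*δ))^α * δ^β / (2^j*(δ/2))^(α+β+2) with hbb
      have hpt : ∀ z ∈ V j, ENNReal.ofReal (s19ker α β z w) ≤ ENNReal.ofReal bb := by
        intro z hzj
        obtain ⟨⟨hlt, hge⟩, hzb⟩ := hzj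
        simp only [mem_setOf_eq, not_lt] at hlt hge
        have hz1 : ‖z‖ < 1 := by rwa [mem_ball, Complex.dist_eq, sub_zero] at hzb
        apply ENNReal.ofReal_le_ofReal
        have hup : ‖1 - (starRingEnd ℂ) z * w‖ ≤ 2^j*δ := by
          have he : (2:ℝ)^(j+1)*(δ/2) = 2^j*δ := by rw [pow_succ]; ring
          linarith [he ▸ hlt]
        exact s19ker_le_ann α β hα hβ z w hz1 hw (by positivity) hge hup
      calc ∫⁻ z in V j, ENNReal.ofReal (s19ker α β z w)
          ≤ ∫⁻ _ in V j, ENNReal.ofReal bb := setLIntegral_mono' (hmeasV j) hpt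
        _ = ENNReal.ofReal bb * volume (V j) := setLIntegral_const _ _
        _ ≤ ENNReal.ofReal bb * ENNReal.ofReal (π * (2^(j+1)*δ)^2) := by
            gcongr
            have hsub : V j ⊆ ball ((starRingEnd ℂ) w)⁻¹ (2*(2^(j+1)*(δ/2))) := by
              refine subset_trans ?_ (s19_ball_sub w hw2 _)
              intro z hzj
              exact hzj.1.1
            have he : 2*((2:ℝ)^(j+1)*(δ/2)) = 2^(j+1)*δ := by ring
            calc volume (V j) ≤ volume (ball ((starRingEnd ℂ) w)⁻¹ (2*(2^(j+1)*(δ/2)))) :=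
                  measure_mono hsub
              _ = ENNReal.ofReal (π * (2^(j+1)*δ)^2) := by rw [he, s19_vol _ _ (by positivity)]
        _ = ENNReal.ofReal (π * (2^(j+1)*δ)^2 * bb) := by
            rw [← ENNReal.ofReal_mul' (by positivity)]
            ring_nf
        _ = ENNReal.ofReal (π * 2^(2*α+β+4) * ((2:ℝ)^(-β))^j) := by
            rw [hbb, s19_g α β δ hB0 j]
    calc ∫⁻ z in ball (0:ℂ) 1, ENNReal.ofReal (s19ker α β z w)
        ≤ ∫⁻ z in ⋃ j, V j, ENNReal.ofReal (s19ker α β z w) := lintegral_mono_set hcover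
      _ ≤ ∑' j, ∫⁻ z in V j, ENNReal.ofReal (s19ker α β z w) := lintegral_iUnion_le _ _
      _ ≤ ∑' j : ℕ, ENNReal.ofReal (π * 2^(2*α+β+4) * ((2:ℝ)^(-β))^j) :=
          ENNReal.tsum_le_tsum hterm
      _ = ∑' j : ℕ, ENNReal.ofReal (π * 2^(2*α+β+4)) * (ENNReal.ofReal ((2:ℝ)^(-β)))^j := by
          congr 1; funext j
          rw [ENNReal.ofReal_mul (by positivity), ENNReal.ofReal_pow h2β0.le]
      _ = ENNReal.ofReal (π * 2^(2*α+β+4)) * (1 - ENNReal.ofReal ((2:ℝ)^(-β)))⁻¹ := by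
          rw [ENNReal.tsum_mul_left, ENNReal.tsum_geometric]
      _ = ENNReal.ofReal (π * 2^(2*α+β+4)) * ENNReal.ofReal ((1 - (2:ℝ)^(-β))⁻¹) := by
          congr 1
          rw [ENNReal.ofReal_inv_of_pos hden, ENNReal.ofReal_sub _ h2β0.le, ENNReal.ofReal_one]
      _ = ENNReal.ofReal (π * 2^(2*α+β+4) * (1 - (2:ℝ)^(-β))⁻¹) := by
          rw [← ENNReal.ofReal_mul (by positivity)]
      _ ≤ ENNReal.ofReal (π * 2^(α+β+2) + π * 2^(2*α+β+4) / (1 - 2^(-β))) := by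
          apply ENNReal.ofReal_le_ofReal
          rw [div_eq_mul_inv]
          have : (0:ℝ) < π * 2^(α+β+2) := by positivity
          linarith


lemma s19_mass (ℓ : ℂ → ℝ) (hl0 : ∀ w, 0 ≤ ℓ w)
    (hli : IntegrableOn ℓ (ball (0:ℂ) 1)) (C : ℝ) (hC : 0 ≤ C) (ζ : ℂ) (hζ : ζ ∈ sphere (0:ℂ) 1)
    (hcar : ∀ r ∈ Ioo (0:ℝ) 2, (∫ w in ball (0:ℂ) 1 ∩ ball ζ r, ℓ w) ≤ C * r) :
    ∀ s : ℝ, ∫⁻ w in ball (0:ℂ) 1 ∩ ball ζ s, ENNReal.ofReal (ℓ w)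
      ≤ ENNReal.ofReal (C * min s 2) := by
  have base : ∀ s ∈ Ioo (0:ℝ) 2, ∫⁻ w in ball (0:ℂ) 1 ∩ ball ζ s, ENNReal.ofReal (ℓ w)
      ≤ ENNReal.ofReal (C * s) := by
    intro s hs
    have hint : IntegrableOn ℓ (ball (0:ℂ) 1 ∩ ball ζ s) := hli.mono_set inter_subset_left
    rw [← ofReal_integral_eq_lintegral_ofReal hint (ae_of_all _ hl0)]
    exact ENNReal.ofReal_le_ofReal (hcar s hs)
  intro s
  rcases le_or_gt s 0 with hs | hs
  · rw [ball_eq_empty.2 hs, inter_empty]; simp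
  rcases lt_or_ge s 2 with h2 | h2
  · rw [min_eq_left h2.le]; exact base s ⟨hs, h2⟩
  · rw [min_eq_right h2]
    have htot : ∫⁻ w in ball (0:ℂ) 1, ENNReal.ofReal (ℓ w) ≤ ENNReal.ofReal (C * 2) := by
      set ν := volume.withDensity (fun w => ENNReal.ofReal (ℓ w)) with hν
      have happ : ∀ t : Set ℂ, MeasurableSet t → ν t = ∫⁻ w in t, ENNReal.ofReal (ℓ w) :=
        fun t ht => withDensity_apply _ ht
      set S : ℕ → Set ℂ := fun n => ball (0:ℂ) 1 ∩ ball ζ (2 - 1/(n+1)) with hS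
      have hSm : ∀ n, MeasurableSet (S n) := fun n => measurableSet_ball.inter measurableSet_ball
      have hmono : Monotone S := by
        intro m n hmn
        apply inter_subset_inter_right
        apply ball_subset_ball
        have h1 : (0:ℝ) < (m:ℝ) + 1 := by positivity
        have h2 : (m:ℝ) + 1 ≤ (n:ℝ) + 1 := by exact_mod_cast by omega
        have := one_div_le_one_div_of_le h1 h2
        linarith
      have hcov : ball (0:ℂ) 1 ⊆ ⋃ n, S n := by
        intro w hw
        have hw1 : dist w (0:ℂ) < 1 := mem_ball.1 hw
        have hζ1 : dist (0:ℂ) ζ = 1 := by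
          rw [dist_comm]; exact mem_sphere.1 hζ
        have hd : dist w ζ < 2 := by
          calc dist w ζ ≤ dist w 0 + dist 0 ζ := dist_triangle _ _ _
            _ < 2 := by rw [hζ1]; linarith
        obtain ⟨n, hn⟩ := exists_nat_one_div_lt (show (0:ℝ) < 2 - dist w ζ by linarith)
        exact mem_iUnion.2 ⟨n, hw, mem_ball.2 (by push_cast at hn ⊢; linarith)⟩
      calc ∫⁻ w in ball (0:ℂ) 1, ENNReal.ofReal (ℓ w) = ν (ball (0:ℂ) 1) :=
            (happ _ measurableSet_ball).symm
        _ ≤ ν (⋃ n, S n) := measure_mono hcov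
        _ = ⨆ n, ν (S n) := hmono.directed_le.measure_iUnion
        _ ≤ ENNReal.ofReal (C * 2) := by
            apply iSup_le
            intro n
            rw [happ _ (hSm n)]
            have h1 : (0:ℝ) < 1/((n:ℝ)+1) := by positivity
            have h1' : 1/((n:ℝ)+1) ≤ 1 := by
              rw [div_le_one (by positivity)]; linarith [Nat.cast_nonneg (α := ℝ) n]
            refine (base _ ⟨by linarith, by linarith⟩).trans (ENNReal.ofReal_le_ofReal ?_)
            nlinarith
    exact (lintegral_mono_set inter_subset_left).trans htot

set_option maxHeartbeats 1000000

/-- Carleson-measure boundedness of the kernel operator: for `α, β > 0` there is a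
constant `K = C(α,β)` such that whenever `ℓ ≥ 0` defines a Carleson measure
`ℓ(w) dudv` on `𝔻` with Carleson norm at most `C`, the function
`λ̃(z) = ∬_𝔻 (1−|z|²)^α (1−|w|²)^β / |1−z̄w|^{α+β+2} ℓ(w) dudv` defines a Carleson
measure `λ̃(z) dxdy` with norm at most `K·C`. -/
theorem stmt19 (α β : ℝ) (hα : 0 < α) (hβ : 0 < β) :
    ∃ K : ℝ, 0 < K ∧
      ∀ (ℓ : ℂ → ℝ), Measurable ℓ → (∀ w, 0 ≤ ℓ w) →
        IntegrableOn ℓ (ball (0:ℂ) 1) →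
        ∀ C : ℝ, 0 ≤ C →
          (∀ ζ ∈ sphere (0:ℂ) 1, ∀ r ∈ Ioo (0:ℝ) 2,
            (∫ w in ball (0:ℂ) 1 ∩ ball ζ r, ℓ w) ≤ C * r) →
          ∀ ζ ∈ sphere (0:ℂ) 1, ∀ r ∈ Ioo (0:ℝ) 2,
            (∫ z in ball (0:ℂ) 1 ∩ ball ζ r,
                ∫ w in ball (0:ℂ) 1,
                  ((1 - ‖z‖ ^ 2) ^ α * (1 - ‖w‖ ^ 2) ^ β /
                      ‖1 - (starRingEnd ℂ) z * w‖ ^ (α + β + 2)) * ℓ w)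
              ≤ K * C * r := by
  obtain ⟨c₁, hc₁, hFR⟩ := s19_FR α β hα hβ
  set c₅ : ℝ := 4 * π * 2^(α+β) with hc₅def
  have hc₅ : 0 < c₅ := by positivity
  refine ⟨2*c₁ + 2*c₅, by positivity, ?_⟩
  intro ℓ hlm hl0 hli C hC hcar ζ hζ r hr
  obtain ⟨hr0, hr2⟩ := hr
  show (∫ z in ball (0:ℂ) 1 ∩ ball ζ r, ∫ w in ball (0:ℂ) 1, s19ker α β z w * ℓ w)
      ≤ (2*c₁ + 2*c₅) * C * r
  set D : Set ℂ := ball (0:ℂ) 1 with hD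
  set E : Set ℂ := D ∩ ball ζ r with hEdef
  have hEm : MeasurableSet E := measurableSet_ball.inter measurableSet_ball
  have mK : Measurable (fun p : ℂ × ℂ => s19ker α β p.1 p.2) := s19_meas α β hα.le hβ.le
  have mK1 : ∀ z : ℂ, Measurable (fun w => s19ker α β z w) := by
    intro z
    have h := mK.comp (measurable_prodMk_left (x := z))
    exact h
  have mK2 : ∀ w : ℂ, Measurable (fun z => s19ker α β z w) := by
    intro w
    have h := mK.comp (measurable_prodMk_right (y := w))
    exact h
  set G : ℂ → ℝ≥0∞ := fun z =>
    ∫⁻ w in D, ENNReal.ofReal (s19ker α β z w) * ENNReal.ofReal (ℓ w) with hG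
  have mG : Measurable G := by
    apply Measurable.lintegral_prod_right
    exact (ENNReal.measurable_ofReal.comp mK).mul
      (ENNReal.measurable_ofReal.comp (hlm.comp measurable_snd))
  have habs : ∀ z : ℂ, z ∈ D → ‖z‖ < 1 := by
    intro z hz; rwa [hD, mem_ball, Complex.dist_eq, sub_zero] at hz
  -- per-z identity
  have hF_eq : ∀ z ∈ E, (∫ w in D, s19ker α β z w * ℓ w) = (G z).toReal := by
    intro z hz
    have h1 : (∫ w in D, s19ker α β z w * ℓ w)
        = (∫⁻ w in D, ENNReal.ofReal (s19ker α β z w * ℓ w)).toReal := by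
      apply integral_eq_lintegral_of_nonneg_ae
      · apply ae_restrict_of_forall_mem measurableSet_ball
        intro w hw
        exact mul_nonneg (s19ker_nonneg α β z w (habs z hz.1).le (habs w hw).le) (hl0 w)
      · exact ((mK1 z).mul hlm).aestronglyMeasurable
    rw [h1]
    congr 1
    exact lintegral_congr fun w => ENNReal.ofReal_mul' (hl0 w)
  -- outer conversion
  have key1 : (∫ z in E, ∫ w in D, s19ker α β z w * ℓ w)
      = (∫⁻ z in E, ENNReal.ofReal (∫ w in D, s19ker α β z w * ℓ w)).toReal := by
    apply integral_eq_lintegral_of_nonneg_ae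
    · apply ae_restrict_of_forall_mem hEm
      intro z hz
      apply setIntegral_nonneg measurableSet_ball
      intro w hw
      exact mul_nonneg (s19ker_nonneg α β z w (habs z hz.1).le (habs w hw).le) (hl0 w)
    · apply (mG.ennreal_toReal.aestronglyMeasurable).congr
      apply (ae_restrict_of_forall_mem hEm _).mono
      · intro z hz; exact hz
      · intro z hz; exact (hF_eq z hz).symm
  have key2 : (∫⁻ z in E, ENNReal.ofReal (∫ w in D, s19ker α β z w * ℓ w)) ≤ ∫⁻ z in E, G z := by
    apply lintegral_mono_ae
    apply (ae_restrict_of_forall_mem hEm _).mono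
    · intro z hz; exact hz
    · intro z hz
      rw [hF_eq z hz]
      exact ENNReal.ofReal_toReal_le
  set J : ℂ → ℝ≥0∞ := fun w => ∫⁻ z in E, ENNReal.ofReal (s19ker α β z w) with hJ
  have swap : (∫⁻ z in E, G z) = ∫⁻ w in D, J w * ENNReal.ofReal (ℓ w) := by
    have hmeas : AEMeasurable
        (Function.uncurry fun z w => ENNReal.ofReal (s19ker α β z w) * ENNReal.ofReal (ℓ w))
        ((volume.restrict E).prod (volume.restrict D)) := by
      apply Measurable.aemeasurable
      exact (ENNReal.measurable_ofReal.comp mK).mul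
        (ENNReal.measurable_ofReal.comp (hlm.comp measurable_snd))
    calc (∫⁻ z in E, G z)
        = ∫⁻ w in D, ∫⁻ z in E, ENNReal.ofReal (s19ker α β z w) * ENNReal.ofReal (ℓ w) :=
          lintegral_lintegral_swap hmeas
      _ = ∫⁻ w in D, J w * ENNReal.ofReal (ℓ w) := by
          apply lintegral_congr
          intro w
          exact lintegral_mul_const _ (ENNReal.measurable_ofReal.comp (mK2 w))
  -- split near / far
  have hsplit : (∫⁻ w in D, J w * ENNReal.ofReal (ℓ w))
      = (∫⁻ w in D ∩ ball ζ (2*r), J w * ENNReal.ofReal (ℓ w))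
        + ∫⁻ w in D \ ball ζ (2*r), J w * ENNReal.ofReal (ℓ w) := by
    rw [← lintegral_union (measurableSet_ball.diff measurableSet_ball)
      (disjoint_sdiff_self_right.mono_left inter_subset_right), inter_union_diff]
  -- near estimate
  have hnear : (∫⁻ w in D ∩ ball ζ (2*r), J w * ENNReal.ofReal (ℓ w))
      ≤ ENNReal.ofReal (2*c₁*C*r) := by
    have hpt : ∀ w ∈ D ∩ ball ζ (2*r), J w * ENNReal.ofReal (ℓ w)
        ≤ ENNReal.ofReal c₁ * ENNReal.ofReal (ℓ w) := by
      intro w hw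
      have hJw : J w ≤ ENNReal.ofReal c₁ :=
        (lintegral_mono_set inter_subset_left).trans (hFR w (habs w hw.1))
      exact mul_le_mul_left hJw _
    calc (∫⁻ w in D ∩ ball ζ (2*r), J w * ENNReal.ofReal (ℓ w))
        ≤ ∫⁻ w in D ∩ ball ζ (2*r), ENNReal.ofReal c₁ * ENNReal.ofReal (ℓ w) :=
          setLIntegral_mono' (measurableSet_ball.inter measurableSet_ball) hpt
      _ = ENNReal.ofReal c₁ * ∫⁻ w in D ∩ ball ζ (2*r), ENNReal.ofReal (ℓ w) :=
          lintegral_const_mul _ (ENNReal.measurable_ofReal.comp hlm)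
      _ ≤ ENNReal.ofReal c₁ * ENNReal.ofReal (C * min (2*r) 2) := by
          gcongr
          exact s19_mass ℓ hl0 hli C hC ζ hζ (hcar ζ hζ) (2*r)
      _ ≤ ENNReal.ofReal (2*c₁*C*r) := by
          rw [← ENNReal.ofReal_mul hc₁.le]
          apply ENNReal.ofReal_le_ofReal
          have h1 : min (2*r) 2 ≤ 2*r := min_le_left _ _
          calc c₁ * (C * min (2*r) 2) ≤ c₁ * (C * (2*r)) := by gcongr
            _ = 2*c₁*C*r := by ring
  -- far estimate
  set A : ℕ → Set ℂ := fun k => D ∩ (ball ζ (2^(k+2)*r) \ ball ζ (2^(k+1)*r)) with hA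
  have hAm : ∀ k, MeasurableSet (A k) := fun k =>
    measurableSet_ball.inter (measurableSet_ball.diff measurableSet_ball)
  have hfarcov : D \ ball ζ (2*r) ⊆ ⋃ k, A k := by
    rintro w ⟨hwD, hwB⟩
    have hζ1 : dist (0:ℂ) ζ = 1 := by rw [dist_comm]; exact mem_sphere.1 hζ
    have hw1 : dist w (0:ℂ) < 1 := mem_ball.1 hwD
    have hd2 : dist w ζ < 2 := by
      calc dist w ζ ≤ dist w 0 + dist 0 ζ := dist_triangle _ _ _
        _ < 2 := by rw [hζ1]; linarith
    have hdr : 2*r ≤ dist w ζ := not_lt.1 (fun h => hwB (mem_ball.2 h))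
    have h2r : (0:ℝ) < 2*r := by linarith
    have hx : 1 ≤ dist w ζ / (2*r) := (one_le_div h2r).2 hdr
    obtain ⟨n, hn1, hn2⟩ := exists_nat_pow_near hx one_lt_two
    refine mem_iUnion.2 ⟨n, hwD, ?_, ?_⟩
    · apply mem_ball.2
      have := (div_lt_iff₀ h2r).1 hn2
      calc dist w ζ < 2^(n+1) * (2*r) := this
        _ = 2^(n+2)*r := by rw [pow_succ, pow_succ]; ring
    · intro hmem
      have h1 := mem_ball.1 hmem
      have h2 : (2:ℝ)^n * (2*r) ≤ dist w ζ := (le_div_iff₀ h2r).1 hn1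
      have : (2:ℝ)^(n+1)*r = 2^n*(2*r) := by rw [pow_succ]; ring
      linarith [this ▸ h1]
  have hfark : ∀ k, (∫⁻ w in A k, J w * ENNReal.ofReal (ℓ w))
      ≤ ENNReal.ofReal (c₅*C*r*((1:ℝ)/2)^k) := by
    intro k
    have hpow1 : (0:ℝ) < 2^k*r := by positivity
    have hJb : ∀ w ∈ A k, J w ≤ ENNReal.ofReal (π * 2^(α+β) * ((1:ℝ)/4)^k) := by
      rintro w ⟨hwD, hwin, hwout⟩
      have hptz : ∀ z ∈ E, ENNReal.ofReal (s19ker α β z w)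
          ≤ ENNReal.ofReal (2^(α+β)/((2^k*r)^2)) := by
        rintro z ⟨hzD, hzB⟩
        apply ENNReal.ofReal_le_ofReal
        apply s19ker_le_far α β hα hβ z w (habs z hzD) (habs w hwD) hpow1
        have h1 : dist z ζ < r := mem_ball.1 hzB
        have h2 : (2:ℝ)^(k+1)*r ≤ dist w ζ := not_lt.1 (fun h => hwout (mem_ball.2 h))
        have h3 : dist w ζ ≤ dist w z + dist z ζ := dist_triangle _ _ _
        have h4 : ‖z - w‖ = dist z w := (Complex.dist_eq z w).symm
        have h5 : (1:ℝ) ≤ 2^k := one_le_pow₀ (by norm_num)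
        have h6 : (2:ℝ)^(k+1) = 2*2^k := by rw [pow_succ]; ring
        rw [h4, dist_comm z w]
        nlinarith
      calc J w ≤ ∫⁻ _ in E, ENNReal.ofReal (2^(α+β)/((2^k*r)^2)) := setLIntegral_mono' hEm hptz
        _ = ENNReal.ofReal (2^(α+β)/((2^k*r)^2)) * volume E := setLIntegral_const _ _
        _ ≤ ENNReal.ofReal (2^(α+β)/((2^k*r)^2)) * ENNReal.ofReal (π*r^2) := by
            gcongr
            calc volume E ≤ volume (ball ζ r) := measure_mono inter_subset_right
              _ = ENNReal.ofReal (π*r^2) := s19_vol ζ r hr0.le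
        _ = ENNReal.ofReal (π * 2^(α+β) * ((1:ℝ)/4)^k) := by
            rw [← ENNReal.ofReal_mul (by positivity)]
            congr 1
            have h7 : ((2:ℝ)^k*r)^2 = 4^k*r^2 := by
              rw [mul_pow, ← pow_right_comm]; norm_num
            have h8 : ((1:ℝ)/4)^k * 4^k = 1 := by rw [← mul_pow]; norm_num
            field_simp [h7]
            have h9 : ((2:ℝ)^k)^2 = 4^k := by rw [← pow_mul, mul_comm, pow_mul]; norm_num
            rw [h9]
            linarith [h8, mul_comm ((4:ℝ)^k) (((1:ℝ)/4)^k)]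
    calc (∫⁻ w in A k, J w * ENNReal.ofReal (ℓ w))
        ≤ ∫⁻ w in A k, ENNReal.ofReal (π * 2^(α+β) * ((1:ℝ)/4)^k) * ENNReal.ofReal (ℓ w) :=
          setLIntegral_mono' (hAm k) (fun w hw => mul_le_mul_left (hJb w hw) _)
      _ = ENNReal.ofReal (π * 2^(α+β) * ((1:ℝ)/4)^k) * ∫⁻ w in A k, ENNReal.ofReal (ℓ w) :=
          lintegral_const_mul _ (ENNReal.measurable_ofReal.comp hlm)
      _ ≤ ENNReal.ofReal (π * 2^(α+β) * ((1:ℝ)/4)^k)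
            * ENNReal.ofReal (C * min (2^(k+2)*r) 2) := by
          gcongr
          refine le_trans (lintegral_mono_set ?_) (s19_mass ℓ hl0 hli C hC ζ hζ (hcar ζ hζ) (2^(k+2)*r))
          exact inter_subset_inter_right _ diff_subset
      _ ≤ ENNReal.ofReal (c₅*C*r*((1:ℝ)/2)^k) := by
          rw [← ENNReal.ofReal_mul (by positivity)]
          apply ENNReal.ofReal_le_ofReal
          have hmin : C * min (2^(k+2)*r) 2 ≤ C * (2^(k+2)*r) :=
            mul_le_mul_of_nonneg_left (min_le_left _ _) hC
          have e : ((1:ℝ)/4)^k * 2^(k+2) = 4*((1:ℝ)/2)^k := by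
            rw [pow_add, show ((1:ℝ)/4)^k * (2^k * 2^2) = ((1/4)^k * 2^k) * 4 by ring, ← mul_pow]
            norm_num
            ring
          have heq : π * 2^(α+β) * ((1:ℝ)/4)^k * (C * (2^(k+2)*r)) = c₅*C*r*((1:ℝ)/2)^k := by
            rw [hc₅def]
            linear_combination (π * (2:ℝ)^(α+β) * C * r) * e
          calc π * 2^(α+β) * ((1:ℝ)/4)^k * (C * min (2^(k+2)*r) 2)
              ≤ π * 2^(α+β) * ((1:ℝ)/4)^k * (C * (2^(k+2)*r)) := by
                apply mul_le_mul_of_nonneg_left hmin (by positivity)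
            _ = c₅*C*r*((1:ℝ)/2)^k := heq
  have hfar : (∫⁻ w in D \ ball ζ (2*r), J w * ENNReal.ofReal (ℓ w))
      ≤ ENNReal.ofReal (2*c₅*C*r) := by
    calc (∫⁻ w in D \ ball ζ (2*r), J w * ENNReal.ofReal (ℓ w))
        ≤ ∫⁻ w in ⋃ k, A k, J w * ENNReal.ofReal (ℓ w) := lintegral_mono_set hfarcov
      _ ≤ ∑' k, ∫⁻ w in A k, J w * ENNReal.ofReal (ℓ w) := lintegral_iUnion_le _ _
      _ ≤ ∑' k, ENNReal.ofReal (c₅*C*r*((1:ℝ)/2)^k) := ENNReal.tsum_le_tsum hfark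
      _ = ENNReal.ofReal (c₅*C*r) * ∑' k : ℕ, (ENNReal.ofReal ((1:ℝ)/2))^k := by
          rw [← ENNReal.tsum_mul_left]
          congr 1; funext k
          rw [← ENNReal.ofReal_pow (by norm_num), ← ENNReal.ofReal_mul (by positivity)]
      _ = ENNReal.ofReal (c₅*C*r) * 2 := by
          congr 1
          rw [ENNReal.tsum_geometric]
          have h1 : ENNReal.ofReal ((1:ℝ)/2) = 2⁻¹ := by
            rw [one_div, ENNReal.ofReal_inv_of_pos (by norm_num)]
            norm_num
          rw [h1, ENNReal.one_sub_inv_two, inv_inv]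
      _ ≤ ENNReal.ofReal (2*c₅*C*r) := by
          rw [mul_comm, show (2:ℝ≥0∞) = ENNReal.ofReal 2 by norm_num,
            ← ENNReal.ofReal_mul (by norm_num)]
          apply ENNReal.ofReal_le_ofReal
          nlinarith
  -- conclude
  rw [key1]
  apply ENNReal.toReal_le_of_le_ofReal (by positivity)
  calc (∫⁻ z in E, ENNReal.ofReal (∫ w in D, s19ker α β z w * ℓ w))
      ≤ ∫⁻ z in E, G z := key2
    _ = ∫⁻ w in D, J w * ENNReal.ofReal (ℓ w) := swap
    _ = _ := hsplit
    _ ≤ ENNReal.ofReal (2*c₁*C*r) + ENNReal.ofReal (2*c₅*C*r) := add_le_add hnear hfar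
    _ ≤ ENNReal.ofReal ((2*c₁ + 2*c₅) * C * r) := by
        rw [← ENNReal.ofReal_add (by positivity) (by positivity)]
        apply ENNReal.ofReal_le_ofReal
        nlinarith
end
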